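/- Let a_m = (a_{m,n})_n and b_α be elements of [0,1]^ℕ, u a free ultrafilter on ℕ, and f : ℕ → R where R is the set of finite unions of closed rational intervals in [0,1]. In the ultrapower setting, the set A_f = ⋃_n {n} × f(n) satisfies: cl_{βM}(A_f) ∩ [a_m, b_α] = ⋂_{U ∈ u} cl(⋃_{n ∈ U} {n} × (f(n) ∩ [a_{m,n}, b_{α,n}])). Consequently, cl(A_f) ∩ [a_m, b_α] = ∅ iff {n : f(n) ∩ [a_{m,n}, b_{α,n}] = ∅} ∈ u. -/

import Mathlib

open Set Filter Topology

namespace Stmt17Aux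

lemma isClosed_of_fibers {S : Set (ℕ × unitInterval)}
    (h : ∀ n : ℕ, IsClosed {y : unitInterval | (n, y) ∈ S}) : IsClosed S := by
  rw [← isOpen_compl_iff, isOpen_iff_mem_nhds]
  rintro ⟨n, y⟩ hny
  rw [mem_nhds_prod_iff]
  refine ⟨{n}, ?_, {y : unitInterval | (n, y) ∈ S}ᶜ, ((h n).isOpen_compl).mem_nhds hny, ?_⟩
  · simp [nhds_discrete]
  · rintro ⟨m, t⟩ ⟨hm, ht⟩
    rcases hm with rfl
    exact ht

lemma disjoint_closures {A B : Set (ℕ × unitInterval)} (hA : IsClosed A) (hB : IsClosed B)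
    (hAB : Disjoint A B) :
    Disjoint (closure (stoneCechUnit '' A)) (closure (stoneCechUnit '' B)) := by
  obtain ⟨g, hg0, hg1, hg01⟩ := exists_continuous_zero_one_of_isClosed hA hB hAB
  have hcg' : Continuous fun x : ℕ × unitInterval => (⟨g x, hg01 x⟩ : unitInterval) :=
    g.continuous.subtype_mk _
  set φ := stoneCechExtend hcg' with hφdef
  have hφ : Continuous φ := continuous_stoneCechExtend hcg'
  have hext : ∀ x, φ (stoneCechUnit x) = ⟨g x, hg01 x⟩ :=
    fun x => congrFun (stoneCechExtend_extends hcg') x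
  have h0 : closure (stoneCechUnit '' A) ⊆ φ ⁻¹' {0} := by
    apply closure_minimal _ (isClosed_singleton.preimage hφ)
    rintro _ ⟨x, hx, rfl⟩
    simp only [mem_preimage, mem_singleton_iff, hext]
    exact Subtype.ext (hg0 hx)
  have h1 : closure (stoneCechUnit '' B) ⊆ φ ⁻¹' {1} := by
    apply closure_minimal _ (isClosed_singleton.preimage hφ)
    rintro _ ⟨x, hx, rfl⟩
    simp only [mem_preimage, mem_singleton_iff, hext]
    exact Subtype.ext (hg1 hx)
  refine Disjoint.mono h0 h1 ?_
  simp [Set.disjoint_left]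
  intro x hx0 hx1
  rw [hx0] at hx1
  exact zero_ne_one hx1

lemma closure_inter {A B : Set (ℕ × unitInterval)} (hA : IsClosed A) (hB : IsClosed B) :
    closure (stoneCechUnit '' A) ∩ closure (stoneCechUnit '' B)
      = closure (stoneCechUnit '' (A ∩ B)) := by
  apply Subset.antisymm
  · rintro x ⟨hxA, hxB⟩
    by_contra hxc
    obtain ⟨ψ, hψ0, hψ1, hψ01⟩ := exists_continuous_zero_one_of_isClosed
      (isClosed_closure (s := stoneCechUnit '' (A ∩ B))) (isClosed_singleton (x := x))
      (by rwa [disjoint_singleton_right])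
    set g : ℕ × unitInterval → ℝ := fun p => ψ (stoneCechUnit p) with hgdef
    have hgc : Continuous g := ψ.continuous.comp continuous_stoneCechUnit
    have hg0 : ∀ p ∈ A ∩ B, g p = 0 := fun p hp =>
      hψ0 (subset_closure (mem_image_of_mem _ hp))
    have hψx : ψ x = 1 := hψ1 rfl
    -- x is in the closure of the part of A where g ≥ 1/2
    have key : ∀ C : Set (ℕ × unitInterval), IsClosed C →
        x ∈ closure (stoneCechUnit '' C) →
        x ∈ closure (stoneCechUnit '' (C ∩ g ⁻¹' Ici (1/2 : ℝ))) := by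
      intro C hC hxC
      have hsplit : C = (C ∩ g ⁻¹' Ici (1/2 : ℝ)) ∪ (C ∩ g ⁻¹' Iic (1/2 : ℝ)) := by
        ext p
        simp only [mem_union, mem_inter_iff, mem_preimage, mem_Ici, mem_Iic]
        constructor
        · intro hp
          rcases le_total (1/2 : ℝ) (g p) with h | h
          · exact Or.inl ⟨hp, h⟩
          · exact Or.inr ⟨hp, h⟩
        · rintro (⟨hp, -⟩ | ⟨hp, -⟩) <;> exact hp
      rw [hsplit, image_union, closure_union] at hxC
      rcases hxC with h | h
      · exact h
      · exfalso
        have hsub : closure (stoneCechUnit '' (C ∩ g ⁻¹' Iic (1/2 : ℝ)))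
            ⊆ {y | ψ y ≤ (1/2 : ℝ)} := by
          apply closure_minimal _ (isClosed_le ψ.continuous continuous_const)
          rintro _ ⟨p, hp, rfl⟩
          exact hp.2
        have := hsub h
        rw [mem_setOf_eq, hψx] at this
        linarith
    have hA1 := key A hA hxA
    have hB1 := key B hB hxB
    have hdisj : Disjoint (A ∩ g ⁻¹' Ici (1/2 : ℝ)) (B ∩ g ⁻¹' Ici (1/2 : ℝ)) := by
      rw [Set.disjoint_left]
      rintro p ⟨hpA, hpg⟩ ⟨hpB, -⟩
      have := hg0 p ⟨hpA, hpB⟩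
      rw [mem_preimage, mem_Ici, this] at hpg
      linarith
    have := disjoint_closures (hA.inter (isClosed_Ici.preimage hgc))
      (hB.inter (isClosed_Ici.preimage hgc)) hdisj
    exact (Set.disjoint_left.mp this hA1) hB1
  · exact subset_inter (closure_mono (image_mono inter_subset_left))
      (closure_mono (image_mono inter_subset_right))

end Stmt17Aux

open Stmt17Aux in
theorem stmt17 (u : Ultrafilter ℕ) (hfree : ∀ a : ℕ, u ≠ pure a)
    (a b : ℕ → unitInterval) (f : ℕ → Set unitInterval)
    (hf : ∀ n : ℕ, ∃ (k : ℕ) (q r : Fin k → ℚ),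
      f n = ⋃ i : Fin k, {x : unitInterval | (q i : ℝ) ≤ (x : ℝ) ∧ (x : ℝ) ≤ (r i : ℝ)}) :
    (closure (stoneCechUnit '' {p : ℕ × unitInterval | p.2 ∈ f p.1}) ∩
        ⋂ (U : Set ℕ) (_ : U ∈ u),
          closure (stoneCechUnit ''
            {p : ℕ × unitInterval | p.1 ∈ U ∧ a p.1 ≤ p.2 ∧ p.2 ≤ b p.1}) =
      ⋂ (U : Set ℕ) (_ : U ∈ u),
        closure (stoneCechUnit ''
          {p : ℕ × unitInterval | p.1 ∈ U ∧ p.2 ∈ f p.1 ∧ a p.1 ≤ p.2 ∧ p.2 ≤ b p.1})) ∧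
    ((closure (stoneCechUnit '' {p : ℕ × unitInterval | p.2 ∈ f p.1}) ∩
        ⋂ (U : Set ℕ) (_ : U ∈ u),
          closure (stoneCechUnit ''
            {p : ℕ × unitInterval | p.1 ∈ U ∧ a p.1 ≤ p.2 ∧ p.2 ≤ b p.1}) = ∅) ↔
      {n : ℕ | f n ∩ Set.Icc (a n) (b n) = ∅} ∈ u) := by
  classical
  -- each `f n` is closed
  have hfc : ∀ n, IsClosed (f n) := by
    intro n
    obtain ⟨k, q, r, hqr⟩ := hf n
    rw [hqr]
    apply isClosed_iUnion_of_finite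
    intro i
    have h : {x : unitInterval | (q i : ℝ) ≤ (x : ℝ) ∧ (x : ℝ) ≤ (r i : ℝ)}
        = {x : unitInterval | (q i : ℝ) ≤ (x : ℝ)} ∩ {x : unitInterval | (x : ℝ) ≤ (r i : ℝ)} :=
      rfl
    rw [h]
    exact (isClosed_le continuous_const continuous_subtype_val).inter
      (isClosed_le continuous_subtype_val continuous_const)
  have hIc : ∀ n, IsClosed {y : unitInterval | a n ≤ y ∧ y ≤ b n} := by
    intro n
    have h : {y : unitInterval | a n ≤ y ∧ y ≤ b n}
        = {y : unitInterval | (a n : ℝ) ≤ (y : ℝ)} ∩ {y : unitInterval | (y : ℝ) ≤ (b n : ℝ)} := by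
      ext y
      simp only [mem_setOf_eq, mem_inter_iff, ← Subtype.coe_le_coe]
    rw [h]
    exact (isClosed_le continuous_const continuous_subtype_val).inter
      (isClosed_le continuous_subtype_val continuous_const)
  have hF : IsClosed {p : ℕ × unitInterval | p.2 ∈ f p.1} :=
    isClosed_of_fibers fun n => hfc n
  have hC : ∀ U : Set ℕ,
      IsClosed {p : ℕ × unitInterval | p.1 ∈ U ∧ a p.1 ≤ p.2 ∧ p.2 ≤ b p.1} := by
    intro U
    apply isClosed_of_fibers
    intro n
    by_cases h : n ∈ U
    · simpa [h] using hIc n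
    · simpa [h] using isClosed_empty
  have hFC : ∀ U : Set ℕ,
      {p : ℕ × unitInterval | p.2 ∈ f p.1} ∩
        {p : ℕ × unitInterval | p.1 ∈ U ∧ a p.1 ≤ p.2 ∧ p.2 ≤ b p.1}
      = {p : ℕ × unitInterval | p.1 ∈ U ∧ p.2 ∈ f p.1 ∧ a p.1 ≤ p.2 ∧ p.2 ≤ b p.1} := by
    intro U
    ext p
    simp only [mem_inter_iff, mem_setOf_eq]
    tauto
  have heq : (closure (stoneCechUnit '' {p : ℕ × unitInterval | p.2 ∈ f p.1}) ∩
        ⋂ (U : Set ℕ) (_ : U ∈ u),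
          closure (stoneCechUnit ''
            {p : ℕ × unitInterval | p.1 ∈ U ∧ a p.1 ≤ p.2 ∧ p.2 ≤ b p.1}) =
      ⋂ (U : Set ℕ) (_ : U ∈ u),
        closure (stoneCechUnit ''
          {p : ℕ × unitInterval | p.1 ∈ U ∧ p.2 ∈ f p.1 ∧ a p.1 ≤ p.2 ∧ p.2 ≤ b p.1})) := by
    apply Subset.antisymm
    · rintro x ⟨hxF, hxI⟩
      simp only [mem_iInter] at hxI ⊢
      intro U hU
      have hx : x ∈ closure (stoneCechUnit '' {p : ℕ × unitInterval | p.2 ∈ f p.1}) ∩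
          closure (stoneCechUnit ''
            {p : ℕ × unitInterval | p.1 ∈ U ∧ a p.1 ≤ p.2 ∧ p.2 ≤ b p.1}) :=
        ⟨hxF, hxI U hU⟩
      rw [closure_inter hF (hC U), hFC U] at hx
      exact hx
    · intro x hx
      simp only [mem_iInter] at hx
      refine ⟨?_, ?_⟩
      · exact closure_mono (image_mono fun p hp => hp.2.1) (hx univ univ_mem)
      · simp only [mem_iInter]
        intro U hU
        refine closure_mono (image_mono ?_) (hx U hU)
        intro p hp
        exact ⟨hp.1, hp.2.2⟩
  refine ⟨heq, ?_⟩
  rw [heq]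
  constructor
  · -- if nonempty set of indices with nonempty fibers, the intersection is nonempty
    intro hempty
    by_contra hW
    have hVmem : {n : ℕ | f n ∩ Set.Icc (a n) (b n) = ∅}ᶜ ∈ u :=
      Ultrafilter.compl_mem_iff_notMem.mpr hW
    haveI : Nonempty {U : Set ℕ // U ∈ u} := ⟨⟨univ, univ_mem⟩⟩
    have hne : (⋂ (V : {U : Set ℕ // U ∈ u}),
        closure (stoneCechUnit ''
          {p : ℕ × unitInterval | p.1 ∈ V.1 ∧ p.2 ∈ f p.1 ∧ a p.1 ≤ p.2 ∧ p.2 ≤ b p.1})).Nonempty := by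
      apply IsCompact.nonempty_iInter_of_directed_nonempty_isCompact_isClosed
      · rintro ⟨U, hU⟩ ⟨V, hV⟩
        refine ⟨⟨U ∩ V, inter_mem hU hV⟩,
          closure_mono (image_mono fun p hp => ⟨hp.1.1, hp.2⟩),
          closure_mono (image_mono fun p hp => ⟨hp.1.2, hp.2⟩)⟩
      · rintro ⟨U, hU⟩
        obtain ⟨n, hnU, hnV⟩ := Filter.nonempty_of_mem (inter_mem hU hVmem)
        have hnV' : f n ∩ Set.Icc (a n) (b n) ≠ ∅ := hnV
        obtain ⟨t, htf, htI⟩ := Set.nonempty_iff_ne_empty.mpr hnV'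
        rw [mem_Icc] at htI
        exact Set.Nonempty.closure (Set.Nonempty.image _
          ⟨(n, t), hnU, htf, htI.1, htI.2⟩)
      · rintro ⟨U, hU⟩
        exact isClosed_closure.isCompact
      · rintro ⟨U, hU⟩
        exact isClosed_closure
    obtain ⟨x, hx⟩ := hne
    have hx' : x ∈ ⋂ (U : Set ℕ) (_ : U ∈ u),
        closure (stoneCechUnit ''
          {p : ℕ × unitInterval | p.1 ∈ U ∧ p.2 ∈ f p.1 ∧ a p.1 ≤ p.2 ∧ p.2 ≤ b p.1}) :=
      mem_iInter₂.mpr fun U hU => mem_iInter.mp hx ⟨U, hU⟩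
    rw [hempty] at hx'
    exact hx'
  · intro hWmem
    apply eq_empty_of_subset_empty
    refine subset_trans (iInter₂_subset _ hWmem) ?_
    have h : {p : ℕ × unitInterval |
        p.1 ∈ {n : ℕ | f n ∩ Set.Icc (a n) (b n) = ∅} ∧
          p.2 ∈ f p.1 ∧ a p.1 ≤ p.2 ∧ p.2 ≤ b p.1} = ∅ := by
      ext p
      simp only [mem_setOf_eq, mem_empty_iff_false, iff_false]
      rintro ⟨h1, h2, h3, h4⟩
      exact eq_empty_iff_forall_notMem.mp h1 p.2 ⟨h2, mem_Icc.mpr ⟨h3, h4⟩⟩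
    rw [h, image_empty, closure_empty]
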